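/- (Exact-gradient DOGD, Lipschitz case.) In the DOGD setting described below with exact gradient feedback r_t = ∇f_t(x_t) for all t ∈ [T], assume additionally that ‖∇f_t(x)‖ ≤ L for all x ∈ X and all t ∈ [T]. Then the dynamic regret of DOGD with constant step size η > 0 satisfies R^{NS}_T ≤ 2R²/(ηκ) + 3R V_T/(ηκ) + η L² T d/(2κ) + L(d−1) V_T/κ + 2η(d−1)L² T/κ. -/

import Mathlib

open RealInnerProductSpace

private lemma sum_Icc_eq_range {M : Type*} [AddCommMonoid M] (f : ℕ → M) (a b : ℕ) :
    ∑ j ∈ Finset.Icc a b, f j = ∑ i ∈ Finset.range (b + 1 - a), f (a + i) := by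
  rw [← Finset.Ico_add_one_right_eq_Icc, Finset.sum_Ico_eq_sum_range]

private lemma proj_sq_le {p : ℕ} {X : Set (EuclideanSpace ℝ (Fin p))} (hXconv : Convex ℝ X)
    {P y u : EuclideanSpace ℝ (Fin p)} (hP : P ∈ X) (hu : u ∈ X)
    (hmin : ∀ z ∈ X, ‖P - y‖ ≤ ‖z - y‖) : ‖P - u‖ ^ 2 ≤ ‖y - u‖ ^ 2 := by
  have hne : Nonempty X := ⟨P, hP⟩
  have heq : ‖y - P‖ = ⨅ w : X, ‖y - (w : EuclideanSpace ℝ (Fin p))‖ := by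
    refine le_antisymm (le_ciInf fun w => ?_) ?_
    · rw [norm_sub_rev y P, norm_sub_rev y (w : EuclideanSpace ℝ (Fin p))]
      exact hmin w w.2
    · exact ciInf_le ⟨0, fun r ⟨w, hw⟩ => hw ▸ norm_nonneg _⟩ (⟨P, hP⟩ : X)
  have hvar := (norm_eq_iInf_iff_real_inner_le_zero hXconv hP).mp heq u hu
  have hexp : ‖y - u‖ ^ 2 = ‖y - P‖ ^ 2 + 2 * ⟪y - P, P - u⟫ + ‖P - u‖ ^ 2 := by
    have : y - u = (y - P) + (P - u) := by abel
    rw [this, norm_add_sq_real]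
  have h2 : (0:ℝ) ≤ ⟪y - P, P - u⟫ := by
    have : ⟪y - P, P - u⟫ = -⟪y - P, u - P⟫ := by
      rw [← inner_neg_right]; congr 1; abel
    rw [this]; linarith
  nlinarith [sq_nonneg ‖y - P‖]

private lemma path_range {p : ℕ} (y : ℕ → EuclideanSpace ℝ (Fin p)) (a n : ℕ) :
    ‖y (a + n) - y a‖ ≤ ∑ i ∈ Finset.range n, ‖y (a + i + 1) - y (a + i)‖ := by
  induction n with
  | zero => simp
  | succ n ih =>
    rw [Finset.sum_range_succ]
    have : y (a + (n+1)) - y a = (y (a + n + 1) - y (a + n)) + (y (a + n) - y a) := by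
      rw [show a + (n+1) = a + n + 1 by omega]; abel
    calc ‖y (a + (n+1)) - y a‖ ≤ ‖y (a + n + 1) - y (a + n)‖ + ‖y (a + n) - y a‖ := by
          rw [this]; exact norm_add_le _ _
      _ ≤ _ := by linarith

private lemma path_Icc {p : ℕ} (y : ℕ → EuclideanSpace ℝ (Fin p)) {a b : ℕ} (ha : 1 ≤ a)
    (hab : a ≤ b) : ‖y b - y a‖ ≤ ∑ j ∈ Finset.Icc a (b - 1), ‖y (j + 1) - y j‖ := by
  have h := path_range y a (b - a)
  rw [show a + (b - a) = b by omega] at h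
  refine h.trans_eq ?_
  rw [sum_Icc_eq_range (fun j => ‖y (j + 1) - y j‖) a (b-1),
    show b - 1 + 1 - a = b - a by omega]

private lemma sq_diff_le {p : ℕ} {R : ℝ} {a u u' : EuclideanSpace ℝ (Fin p)}
    (ha : ‖a‖ ≤ R) (hu : ‖u‖ ≤ R) (hu' : ‖u'‖ ≤ R) :
    ‖a - u'‖ ^ 2 - ‖a - u‖ ^ 2 ≤ 4 * R * ‖u' - u‖ := by
  have key : ‖a - u'‖ ^ 2 - ‖a - u‖ ^ 2 = ⟪u - u', (a - u') + (a - u)⟫ := by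
    have h1 : u - u' = (a - u') - (a - u) := by abel
    rw [h1, inner_sub_left, inner_add_right, inner_add_right,
      real_inner_self_eq_norm_sq, real_inner_self_eq_norm_sq, real_inner_comm (a - u')]
    ring
  have h2 : ⟪u - u', (a - u') + (a - u)⟫ ≤ ‖u - u'‖ * ‖(a - u') + (a - u)‖ :=
    real_inner_le_norm _ _
  have h3 : ‖(a - u') + (a - u)‖ ≤ 4 * R := by
    have := norm_add_le (a - u') (a - u)
    have h4 := norm_sub_le a u'
    have h5 := norm_sub_le a u
    linarith
  have h6 : ‖u - u'‖ = ‖u' - u‖ := norm_sub_rev _ _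
  calc ‖a - u'‖ ^ 2 - ‖a - u‖ ^ 2 ≤ ‖u - u'‖ * ‖(a - u') + (a - u)‖ := by rw [key]; exact h2
    _ ≤ ‖u' - u‖ * (4 * R) := by rw [← h6]; exact mul_le_mul_of_nonneg_left h3 (norm_nonneg _)
    _ = 4 * R * ‖u' - u‖ := by ring

private lemma indic_sum (n c t : ℕ) :
    (∑ i ∈ Finset.range n, if c = t + i then 1 else 0) =
      if c ∈ Finset.Ico t (t + n) then 1 else 0 := by
  induction n with
  | zero => simp
  | succ n ih =>
    rw [Finset.sum_range_succ, ih]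
    simp only [Finset.mem_Ico]
    split_ifs <;> omega

private lemma ite_le_ite {c1 c2 : Prop} [Decidable c1] [Decidable c2] {a : ℝ}
    (h : c1 → c2) (ha : 0 ≤ a) : (if c1 then a else 0) ≤ (if c2 then a else 0) := by
  split_ifs with h1 h2
  · exact le_refl _
  · exact absurd (h h1) h2
  · exact ha
  · exact le_refl _

set_option maxHeartbeats 1000000 in
/-- Dynamic regret bound for exact-gradient DOGD on L-Lipschitz quasar-convex losses
(Corollary 4.2(1)). -/
theorem dogd_exact_dynamic_regret_lipschitz
    (p T : ℕ) (hT : 1 ≤ T)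
    (X : Set (EuclideanSpace ℝ (Fin p)))
    (hXne : X.Nonempty) (hXclosed : IsClosed X) (hXconv : Convex ℝ X)
    (R : ℝ) (hR : 0 < R) (hXR : ∀ z ∈ X, ‖z‖ ≤ R)
    (f : ℕ → EuclideanSpace ℝ (Fin p) → ℝ)
    (hfdiff : ∀ t ∈ Finset.Icc 1 T, Differentiable ℝ (f t))
    (xs : ℕ → EuclideanSpace ℝ (Fin p))
    (hxs : ∀ t ∈ Finset.Icc 1 T, xs t ∈ X ∧ ∀ z ∈ X, f t (xs t) ≤ f t z)
    (κ : ℝ) (hκ0 : 0 < κ) (hκ1 : κ ≤ 1)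
    (hqc : ∀ t ∈ Finset.Icc 1 T, ∀ z ∈ X,
      f t z + (1/κ) * ⟪gradient (f t) z, xs t - z⟫ ≤ f t (xs t))
    (dl : ℕ → ℕ) (hdl : ∀ t ∈ Finset.Icc 1 T, 1 ≤ dl t)
    (d : ℕ) (hdub : ∀ t ∈ Finset.Icc 1 T, dl t ≤ d)
    (hdmem : ∃ t ∈ Finset.Icc 1 T, dl t = d)
    (x : ℕ → EuclideanSpace ℝ (Fin p))
    (η : ℝ) (hη : 0 < η)
    (hx1 : x 1 ∈ X)
    (hupd : ∀ t : ℕ, 1 ≤ t →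
      (((Finset.Icc 1 T).filter fun k => k + dl k - 1 = t).Nonempty →
        x (t+1) ∈ X ∧ ∀ z ∈ X,
          ‖x (t+1) - (x t - η • ∑ k ∈ (Finset.Icc 1 T).filter
              (fun k => k + dl k - 1 = t), gradient (f k) (x k))‖ ≤
          ‖z - (x t - η • ∑ k ∈ (Finset.Icc 1 T).filter
              (fun k => k + dl k - 1 = t), gradient (f k) (x k))‖) ∧
      (¬ ((Finset.Icc 1 T).filter fun k => k + dl k - 1 = t).Nonempty →
        x (t+1) = x t))
    (L : ℝ) (hL : ∀ t ∈ Finset.Icc 1 T, ∀ z ∈ X, ‖gradient (f t) z‖ ≤ L) :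
    ∑ t ∈ Finset.Icc 1 T, (f t (x t) - f t (xs t)) ≤
      2 * R^2 / (η * κ)
      + 3 * R * (∑ t ∈ Finset.Icc 1 (T - 1), ‖xs (t+1) - xs t‖) / (η * κ)
      + η * L^2 * (T : ℝ) * (d : ℝ) / (2 * κ)
      + L * ((d : ℝ) - 1) * (∑ t ∈ Finset.Icc 1 (T - 1), ‖xs (t+1) - xs t‖) / κ
      + 2 * η * ((d : ℝ) - 1) * L^2 * (T : ℝ) / κ := by
  classical
  set V : ℝ := ∑ t ∈ Finset.Icc 1 (T - 1), ‖xs (t+1) - xs t‖ with hV_def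
  set g : ℕ → EuclideanSpace ℝ (Fin p) := fun k => gradient (f k) (x k) with hg_def
  set F : ℕ → Finset ℕ := fun s => (Finset.Icc 1 T).filter (fun k => k + dl k - 1 = s)
    with hF_def
  set G : ℕ → EuclideanSpace ℝ (Fin p) := fun s => ∑ k ∈ F s, g k with hG_def
  set S : ℕ := T + d - 1 with hS_def
  set ν : ℕ → ℕ := fun s => min T (max 1 (s + 1 - d)) with hν_def
  set u : ℕ → EuclideanSpace ℝ (Fin p) := fun s => xs (ν s) with hu_def
  -- basic facts
  have hd1 : 1 ≤ d := by
    obtain ⟨t, ht, hdt⟩ := hdmem; exact hdt ▸ hdl t ht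
  have hV0 : 0 ≤ V := Finset.sum_nonneg fun _ _ => norm_nonneg _
  have hxmem : ∀ s, 1 ≤ s → x s ∈ X := by
    intro s hs
    induction s, hs using Nat.le_induction with
    | base => exact hx1
    | succ s hs ih =>
      by_cases h : (F s).Nonempty
      · exact (((hupd s hs).1) h).1
      · rw [((hupd s hs).2) h]; exact ih
  have hxsmem : ∀ k, 1 ≤ k → k ≤ T → xs k ∈ X := fun k h1 h2 =>
    (hxs k (Finset.mem_Icc.mpr ⟨h1, h2⟩)).1
  have hν1 : ∀ s, 1 ≤ ν s ∧ ν s ≤ T := by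
    intro s; constructor <;> simp only [hν_def] <;> omega
  have humem : ∀ s, u s ∈ X := fun s => hxsmem _ (hν1 s).1 (hν1 s).2
  have huR : ∀ s, ‖u s‖ ≤ R := fun s => hXR _ (humem s)
  have hxR : ∀ s, 1 ≤ s → ‖x s‖ ≤ R := fun s hs => hXR _ (hxmem s hs)
  have hL0 : 0 ≤ L := le_trans (norm_nonneg _)
    (hL 1 (Finset.mem_Icc.mpr ⟨le_refl 1, hT⟩) (x 1) hx1)
  have hgL : ∀ k ∈ Finset.Icc 1 T, ‖g k‖ ≤ L := by
    intro k hk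
    exact hL k hk (x k) (hxmem k (Finset.mem_Icc.mp hk).1)
  have hFsub : ∀ s k, k ∈ F s → k ∈ Finset.Icc 1 T ∧ k + dl k - 1 = s := by
    intro s k hk
    simp only [hF_def, Finset.mem_filter] at hk
    exact hk
  have hFbound : ∀ s k, k ∈ F s → s + 1 - d ≤ k ∧ ν s ≤ k ∧ k ≤ s ∧ 1 ≤ k ∧ k ≤ T := by
    intro s k hk
    obtain ⟨hk1, hk2⟩ := hFsub s k hk
    rw [Finset.mem_Icc] at hk1
    have h1 := hdl k (Finset.mem_Icc.mpr hk1)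
    have h2 := hdub k (Finset.mem_Icc.mpr hk1)
    simp only [hν_def]
    omega
  have hFcard : ∀ s, (F s).card ≤ d := by
    intro s
    have hsub : F s ⊆ Finset.Icc (s + 1 - d) s := by
      intro k hk
      obtain ⟨h1, h2, h3, h4, h5⟩ := hFbound s k hk
      rw [Finset.mem_Icc]
      exact ⟨h1, h3⟩
    calc (F s).card ≤ (Finset.Icc (s + 1 - d) s).card := Finset.card_le_card hsub
      _ = s + 1 - (s + 1 - d) := Nat.card_Icc _ _
      _ ≤ d := by omega
  have hGnorm : ∀ s, ‖G s‖ ≤ L * (F s).card := by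
    intro s
    simp only [hG_def]
    calc ‖∑ k ∈ F s, g k‖ ≤ ∑ k ∈ F s, ‖g k‖ := norm_sum_le _ _
      _ ≤ ∑ k ∈ F s, L := Finset.sum_le_sum fun k hk => hgL k (hFsub s k hk).1
      _ = (F s).card * L := by rw [Finset.sum_const, nsmul_eq_mul]
      _ = L * (F s).card := mul_comm _ _
  -- per-round descent inequality
  have hstep : ∀ s, 1 ≤ s → ∀ w ∈ X, ⟪G s, x s - w⟫ ≤
      (‖x s - w‖ ^ 2 - ‖x (s+1) - w‖ ^ 2) / (2 * η) + η / 2 * ‖G s‖ ^ 2 := by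
    intro s hs w hw
    by_cases h : (F s).Nonempty
    · obtain ⟨hmemX, hmin⟩ := (hupd s hs).1 h
      have hproj : ‖x (s+1) - w‖ ^ 2 ≤ ‖(x s - η • G s) - w‖ ^ 2 := by
        apply proj_sq_le hXconv hmemX hw
        intro z hz
        have := hmin z hz
        simpa only [hg_def, hG_def, hF_def] using this
      have hexp : ‖(x s - η • G s) - w‖ ^ 2 =
          ‖x s - w‖ ^ 2 - 2 * η * ⟪G s, x s - w⟫ + η ^ 2 * ‖G s‖ ^ 2 := by
        have h1 : (x s - η • G s) - w = (x s - w) - η • G s := by abel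
        rw [h1, norm_sub_sq_real, real_inner_smul_right, norm_smul, Real.norm_eq_abs,
          abs_of_pos hη, mul_pow, real_inner_comm]
        ring
      have hkey : 2 * η * ⟪G s, x s - w⟫ ≤
          (‖x s - w‖ ^ 2 - ‖x (s+1) - w‖ ^ 2) + η ^ 2 * ‖G s‖ ^ 2 := by
        nlinarith [hproj, hexp]
      rw [div_add' _ _ _ (by positivity : (2:ℝ) * η ≠ 0), le_div_iff₀ (by positivity : (0:ℝ) < 2 * η)]
      nlinarith [hkey]
    · have hG0 : G s = 0 := by
        simp only [hG_def]
        rw [Finset.not_nonempty_iff_eq_empty.mp h, Finset.sum_empty]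
      have hx0 : x (s+1) = x s := (hupd s hs).2 h
      rw [hG0, hx0]
      simp
  -- step move bound
  have hmove : ∀ s, 1 ≤ s → ‖x (s+1) - x s‖ ≤ 2 * η * ‖G s‖ := by
    intro s hs
    by_cases h : (F s).Nonempty
    · obtain ⟨hmemX, hmin⟩ := (hupd s hs).1 h
      have h1 : ‖x (s+1) - (x s - η • G s)‖ ≤ ‖x s - (x s - η • G s)‖ := by
        have := hmin (x s) (hxmem s hs)
        simpa only [hg_def, hG_def, hF_def] using this
      have h2 : ‖x s - (x s - η • G s)‖ = η * ‖G s‖ := by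
        rw [show x s - (x s - η • G s) = η • G s by abel, norm_smul, Real.norm_eq_abs,
          abs_of_pos hη]
      have h3 : x (s+1) - x s = (x (s+1) - (x s - η • G s)) + ((x s - η • G s) - x s) := by
        abel
      have h4 : ‖(x s - η • G s) - x s‖ = η * ‖G s‖ := by
        rw [show (x s - η • G s) - x s = -(η • G s) by abel, norm_neg, norm_smul,
          Real.norm_eq_abs, abs_of_pos hη]
      calc ‖x (s+1) - x s‖ ≤ ‖x (s+1) - (x s - η • G s)‖ + ‖(x s - η • G s) - x s‖ := by
            rw [h3]; exact norm_add_le _ _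
        _ ≤ η * ‖G s‖ + η * ‖G s‖ := by rw [h4]; linarith [h1, h2.le, h2.ge]
        _ = 2 * η * ‖G s‖ := by ring
    · have hG0 : G s = 0 := by
        simp only [hG_def]
        rw [Finset.not_nonempty_iff_eq_empty.mp h, Finset.sum_empty]
      rw [(hupd s hs).2 h, hG0, sub_self, norm_zero, mul_zero]
  -- fiberwise partition
  have hmaps : ∀ k ∈ Finset.Icc 1 T, k + dl k - 1 ∈ Finset.Icc 1 S := by
    intro k hk
    rw [Finset.mem_Icc] at hk ⊢
    have h1 := hdl k (Finset.mem_Icc.mpr hk)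
    have h2 := hdub k (Finset.mem_Icc.mpr hk)
    simp only [hS_def]
    omega
  have hfiber : ∀ w : ℕ → ℝ, ∑ s ∈ Finset.Icc 1 S, ∑ k ∈ F s, w k
      = ∑ k ∈ Finset.Icc 1 T, w k := by
    intro w
    simp only [hF_def]
    exact Finset.sum_fiberwise_of_maps_to hmaps w
  have hcardsum : (∑ s ∈ Finset.Icc 1 S, ((F s).card : ℝ)) = (T : ℝ) := by
    have := hfiber (fun _ => (1:ℝ))
    simpa [Finset.sum_const, nsmul_eq_mul] using this
  -- regret bounded by inner products
  have hregret : ∑ t ∈ Finset.Icc 1 T, (f t (x t) - f t (xs t)) ≤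
      (1/κ) * ∑ t ∈ Finset.Icc 1 T, ⟪g t, x t - xs t⟫ := by
    rw [Finset.mul_sum]
    apply Finset.sum_le_sum
    intro t ht
    have h1 := hqc t ht (x t) (hxmem t (Finset.mem_Icc.mp ht).1)
    have h2 : ⟪g t, xs t - x t⟫ = -⟪g t, x t - xs t⟫ := by
      rw [← inner_neg_right]; congr 1; abel
    simp only [hg_def] at h2 ⊢
    rw [h2] at h1
    have hκinv : 0 < 1/κ := by positivity
    nlinarith [h1]
  -- split
  have hsplit : ∑ t ∈ Finset.Icc 1 T, ⟪g t, x t - xs t⟫ =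
      (∑ t ∈ Finset.Icc 1 T, ⟪g t, x (t + dl t - 1) - xs t⟫)
      + ∑ t ∈ Finset.Icc 1 T, ⟪g t, x t - x (t + dl t - 1)⟫ := by
    rw [← Finset.sum_add_distrib]
    apply Finset.sum_congr rfl
    intro t ht
    rw [← inner_add_right]
    congr 1
    abel
  -- counting for the drift term
  have hcard : ∀ s : ℕ, (F s).card = ∑ k ∈ Finset.Icc 1 T,
      if k + dl k - 1 = s then 1 else 0 := by
    intro s; simp only [hF_def]; exact Finset.card_filter _ _
  have countB : ∑ t ∈ Finset.Icc 1 T, ∑ i ∈ Finset.range (dl t - 1), (F (t+i)).card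
      ≤ (d-1) * T := by
    have step1 : ∀ t ∈ Finset.Icc 1 T, ∑ i ∈ Finset.range (dl t - 1), (F (t+i)).card
        ≤ ∑ k ∈ Finset.Icc 1 T,
            if t ∈ Finset.Icc (k + dl k + 1 - d) (k + dl k - 1) then 1 else 0 := by
      intro t ht
      have hdt2 := hdub t ht
      calc ∑ i ∈ Finset.range (dl t - 1), (F (t+i)).card
          = ∑ i ∈ Finset.range (dl t - 1), ∑ k ∈ Finset.Icc 1 T,
              if k + dl k - 1 = t + i then 1 else 0 :=
            Finset.sum_congr rfl fun i _ => hcard (t+i)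
        _ = ∑ k ∈ Finset.Icc 1 T, ∑ i ∈ Finset.range (dl t - 1),
              if k + dl k - 1 = t + i then 1 else 0 := Finset.sum_comm
        _ ≤ _ := by
            apply Finset.sum_le_sum
            intro k hk
            rw [indic_sum]
            simp only [Finset.mem_Ico, Finset.mem_Icc]
            split_ifs <;> omega
    calc ∑ t ∈ Finset.Icc 1 T, ∑ i ∈ Finset.range (dl t - 1), (F (t+i)).card
        ≤ ∑ t ∈ Finset.Icc 1 T, ∑ k ∈ Finset.Icc 1 T,
            if t ∈ Finset.Icc (k + dl k + 1 - d) (k + dl k - 1) then 1 else 0 :=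
          Finset.sum_le_sum step1
      _ = ∑ k ∈ Finset.Icc 1 T, ∑ t ∈ Finset.Icc 1 T,
            if t ∈ Finset.Icc (k + dl k + 1 - d) (k + dl k - 1) then 1 else 0 :=
          Finset.sum_comm
      _ ≤ ∑ _k ∈ Finset.Icc 1 T, (d - 1) := by
          apply Finset.sum_le_sum
          intro k hk
          rw [Finset.sum_ite_mem, Finset.sum_const, smul_eq_mul, mul_one]
          have hk1 := Finset.mem_Icc.mp hk
          have hk2 := hdl k hk
          have hk3 := hdub k hk
          calc (Finset.Icc 1 T ∩ Finset.Icc (k + dl k + 1 - d) (k + dl k - 1)).card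
              ≤ (Finset.Icc (k + dl k + 1 - d) (k + dl k - 1)).card :=
                Finset.card_le_card Finset.inter_subset_right
            _ = (k + dl k - 1) + 1 - (k + dl k + 1 - d) := Nat.card_Icc _ _
            _ ≤ d - 1 := by omega
      _ = (d-1) * T := by
          rw [Finset.sum_const, Nat.card_Icc, smul_eq_mul]
          have : T + 1 - 1 = T := by omega
          rw [this, Nat.mul_comm]
  -- drift term bound
  have hB : ∑ t ∈ Finset.Icc 1 T, ⟪g t, x t - x (t + dl t - 1)⟫
      ≤ 2*η*L^2*(((d:ℝ)-1) * (T:ℝ)) := by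
    have step : ∀ t ∈ Finset.Icc 1 T, ⟪g t, x t - x (t + dl t - 1)⟫ ≤
        ∑ i ∈ Finset.range (dl t - 1), 2*η*L^2*((F (t+i)).card : ℝ) := by
      intro t ht
      have ht1 := (Finset.mem_Icc.mp ht).1
      have h0 : t + dl t - 1 = t + (dl t - 1) := by have := hdl t ht; omega
      have h1 : ⟪g t, x t - x (t + dl t - 1)⟫ ≤ L * ‖x (t + (dl t - 1)) - x t‖ := by
        calc ⟪g t, x t - x (t + dl t - 1)⟫ ≤ ‖g t‖ * ‖x t - x (t + dl t - 1)‖ :=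
              real_inner_le_norm _ _
          _ = ‖g t‖ * ‖x (t + (dl t - 1)) - x t‖ := by rw [h0, norm_sub_rev]
          _ ≤ L * ‖x (t + (dl t - 1)) - x t‖ :=
              mul_le_mul_of_nonneg_right (hgL t ht) (norm_nonneg _)
      have h2 := path_range x t (dl t - 1)
      have h3 : ∑ i ∈ Finset.range (dl t - 1), ‖x (t+i+1) - x (t+i)‖
          ≤ ∑ i ∈ Finset.range (dl t - 1), 2*η*(L*((F (t+i)).card : ℝ)) := by
        apply Finset.sum_le_sum
        intro i _
        calc ‖x (t+i+1) - x (t+i)‖ ≤ 2 * η * ‖G (t+i)‖ := hmove (t+i) (by omega)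
          _ ≤ 2*η*(L*((F (t+i)).card : ℝ)) := by
              have := hGnorm (t+i)
              nlinarith [this, hη]
      calc ⟪g t, x t - x (t + dl t - 1)⟫ ≤ L * ‖x (t + (dl t - 1)) - x t‖ := h1
        _ ≤ L * ∑ i ∈ Finset.range (dl t - 1), 2*η*(L*((F (t+i)).card : ℝ)) := by
            apply mul_le_mul_of_nonneg_left (le_trans h2 h3) hL0
        _ = ∑ i ∈ Finset.range (dl t - 1), 2*η*L^2*((F (t+i)).card : ℝ) := by
            rw [Finset.mul_sum]
            exact Finset.sum_congr rfl fun i _ => by ring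
    calc ∑ t ∈ Finset.Icc 1 T, ⟪g t, x t - x (t + dl t - 1)⟫
        ≤ ∑ t ∈ Finset.Icc 1 T, ∑ i ∈ Finset.range (dl t - 1),
            2*η*L^2*((F (t+i)).card : ℝ) := Finset.sum_le_sum step
      _ = 2*η*L^2 * ∑ t ∈ Finset.Icc 1 T, ∑ i ∈ Finset.range (dl t - 1),
            ((F (t+i)).card : ℝ) := by
          rw [Finset.mul_sum]
          exact Finset.sum_congr rfl fun t _ => by rw [Finset.mul_sum]
      _ ≤ 2*η*L^2*(((d:ℝ)-1) * (T:ℝ)) := by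
          apply mul_le_mul_of_nonneg_left _ (by positivity)
          have hcast : ∑ t ∈ Finset.Icc 1 T, ∑ i ∈ Finset.range (dl t - 1),
              ((F (t+i)).card : ℝ)
              = ((∑ t ∈ Finset.Icc 1 T, ∑ i ∈ Finset.range (dl t - 1),
                  (F (t+i)).card : ℕ) : ℝ) := by
            push_cast
            rfl
          rw [hcast]
          calc ((∑ t ∈ Finset.Icc 1 T, ∑ i ∈ Finset.range (dl t - 1),
                  (F (t+i)).card : ℕ) : ℝ)
              ≤ (((d-1) * T : ℕ) : ℝ) := Nat.cast_le.mpr countB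
            _ = ((d:ℝ)-1) * (T:ℝ) := by
                push_cast [Nat.cast_sub hd1]
                ring
  -- decomposition of the main term
  have hA : ∑ t ∈ Finset.Icc 1 T, ⟪g t, x (t + dl t - 1) - xs t⟫
      = (∑ s ∈ Finset.Icc 1 S, ⟪G s, x s - u s⟫)
        + ∑ s ∈ Finset.Icc 1 S, ∑ k ∈ F s, ⟪g k, u s - xs k⟫ := by
    have h1 : ∑ t ∈ Finset.Icc 1 T, ⟪g t, x (t + dl t - 1) - xs t⟫
        = ∑ s ∈ Finset.Icc 1 S, ∑ k ∈ F s, ⟪g k, x (k + dl k - 1) - xs k⟫ := by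
      simp only [hF_def]
      exact (Finset.sum_fiberwise_of_maps_to hmaps _).symm
    rw [h1, ← Finset.sum_add_distrib]
    apply Finset.sum_congr rfl
    intro s hs
    have h2 : ∑ k ∈ F s, ⟪g k, x (k + dl k - 1) - xs k⟫
        = ∑ k ∈ F s, ⟪g k, x s - xs k⟫ :=
      Finset.sum_congr rfl fun k hk => by rw [(hFsub s k hk).2]
    have h3 : ∑ k ∈ F s, ⟪g k, x s - xs k⟫
        = ∑ k ∈ F s, (⟪g k, x s - u s⟫ + ⟪g k, u s - xs k⟫) :=
      Finset.sum_congr rfl fun k hk => by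
        rw [← inner_add_right]; congr 1; abel
    rw [h2, h3, Finset.sum_add_distrib]
    congr 1
    simp only [hG_def]
    exact (sum_inner _ _ _).symm
  -- comparator drift term
  have hA2 : ∑ s ∈ Finset.Icc 1 S, ∑ k ∈ F s, ⟪g k, u s - xs k⟫
      ≤ L * (((d:ℝ)-1) * V) := by
    have step : ∀ s ∈ Finset.Icc 1 S, ∑ k ∈ F s, ⟪g k, u s - xs k⟫
        ≤ ∑ k ∈ F s, (L * ∑ j ∈ Finset.Icc (ν (k + dl k - 1)) (k-1),
            ‖xs (j+1) - xs j‖) := by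
      intro s hs
      apply Finset.sum_le_sum
      intro k hk
      obtain ⟨hb1, hb2, hb3, hb4, hb5⟩ := hFbound s k hk
      have hσ : k + dl k - 1 = s := (hFsub s k hk).2
      rw [hσ]
      calc ⟪g k, u s - xs k⟫ ≤ ‖g k‖ * ‖u s - xs k‖ := real_inner_le_norm _ _
        _ ≤ L * ‖u s - xs k‖ :=
            mul_le_mul_of_nonneg_right (hgL k (hFsub s k hk).1) (norm_nonneg _)
        _ = L * ‖xs k - xs (ν s)‖ := by rw [hu_def]; rw [norm_sub_rev]
        _ ≤ L * ∑ j ∈ Finset.Icc (ν s) (k-1), ‖xs (j+1) - xs j‖ :=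
            mul_le_mul_of_nonneg_left (path_Icc xs (hν1 s).1 hb2) hL0
    have hWsum : ∑ s ∈ Finset.Icc 1 S, ∑ k ∈ F s, (L * ∑ j ∈
        Finset.Icc (ν (k + dl k - 1)) (k-1), ‖xs (j+1) - xs j‖)
        = ∑ k ∈ Finset.Icc 1 T, (L * ∑ j ∈
          Finset.Icc (ν (k + dl k - 1)) (k-1), ‖xs (j+1) - xs j‖) :=
      hfiber _
    have hWbound : ∑ k ∈ Finset.Icc 1 T, (∑ j ∈
        Finset.Icc (ν (k + dl k - 1)) (k-1), ‖xs (j+1) - xs j‖)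
        ≤ ((d:ℝ)-1) * V := by
      have hrw : ∀ k ∈ Finset.Icc 1 T, ∑ j ∈ Finset.Icc (ν (k + dl k - 1)) (k-1),
          ‖xs (j+1) - xs j‖
          = ∑ j ∈ Finset.Icc 1 (T-1), if j ∈ Finset.Icc (ν (k + dl k - 1)) (k-1)
              then ‖xs (j+1) - xs j‖ else 0 := by
        intro k hk
        rw [Finset.sum_ite_mem]
        congr 1
        apply (Finset.inter_eq_right.mpr _).symm
        intro j hj
        rw [Finset.mem_Icc] at hj ⊢
        have h1 := (hν1 (k + dl k - 1)).1
        have h2 := (Finset.mem_Icc.mp hk).2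
        omega
      calc ∑ k ∈ Finset.Icc 1 T, (∑ j ∈
            Finset.Icc (ν (k + dl k - 1)) (k-1), ‖xs (j+1) - xs j‖)
          = ∑ k ∈ Finset.Icc 1 T, ∑ j ∈ Finset.Icc 1 (T-1),
              if j ∈ Finset.Icc (ν (k + dl k - 1)) (k-1)
              then ‖xs (j+1) - xs j‖ else 0 := Finset.sum_congr rfl hrw
        _ = ∑ j ∈ Finset.Icc 1 (T-1), ∑ k ∈ Finset.Icc 1 T,
              if j ∈ Finset.Icc (ν (k + dl k - 1)) (k-1)
              then ‖xs (j+1) - xs j‖ else 0 := Finset.sum_comm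
        _ ≤ ∑ j ∈ Finset.Icc 1 (T-1), ∑ k ∈ Finset.Icc 1 T,
              if k ∈ Finset.Icc (j+1) (j+d-1) then ‖xs (j+1) - xs j‖ else 0 := by
            apply Finset.sum_le_sum
            intro j hj
            apply Finset.sum_le_sum
            intro k hk
            apply ite_le_ite _ (norm_nonneg _)
            intro hmem
            rw [Finset.mem_Icc] at hmem ⊢
            have h1 := hdl k hk
            have h2 := hdub k hk
            have h3 := Finset.mem_Icc.mp hk
            have h4 := Finset.mem_Icc.mp hj
            simp only [hν_def] at hmem
            omega
        _ ≤ ∑ j ∈ Finset.Icc 1 (T-1), ((d:ℝ)-1) * ‖xs (j+1) - xs j‖ := by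
            apply Finset.sum_le_sum
            intro j hj
            rw [Finset.sum_ite_mem, Finset.sum_const, nsmul_eq_mul]
            apply mul_le_mul_of_nonneg_right _ (norm_nonneg _)
            calc ((Finset.Icc 1 T ∩ Finset.Icc (j+1) (j+d-1)).card : ℝ)
                ≤ ((Finset.Icc (j+1) (j+d-1)).card : ℝ) :=
                  Nat.cast_le.mpr (Finset.card_le_card Finset.inter_subset_right)
              _ ≤ ((d:ℝ)-1) := by
                  rw [Nat.card_Icc]
                  have : j + d - 1 + 1 - (j + 1) = d - 1 := by omega
                  rw [this]
                  push_cast [Nat.cast_sub hd1]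
                  exact le_refl _
        _ = ((d:ℝ)-1) * V := by rw [hV_def, Finset.mul_sum]
    calc ∑ s ∈ Finset.Icc 1 S, ∑ k ∈ F s, ⟪g k, u s - xs k⟫
        ≤ ∑ s ∈ Finset.Icc 1 S, ∑ k ∈ F s, (L * ∑ j ∈
            Finset.Icc (ν (k + dl k - 1)) (k-1), ‖xs (j+1) - xs j‖) :=
          Finset.sum_le_sum step
      _ = ∑ k ∈ Finset.Icc 1 T, (L * ∑ j ∈
            Finset.Icc (ν (k + dl k - 1)) (k-1), ‖xs (j+1) - xs j‖) := hWsum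
      _ = L * ∑ k ∈ Finset.Icc 1 T, (∑ j ∈
            Finset.Icc (ν (k + dl k - 1)) (k-1), ‖xs (j+1) - xs j‖) := by
          rw [Finset.mul_sum]
      _ ≤ L * (((d:ℝ)-1) * V) := mul_le_mul_of_nonneg_left hWbound hL0
  -- gradient magnitude term
  have hGsq : ∑ s ∈ Finset.Icc 1 S, ‖G s‖^2 ≤ L^2 * (d:ℝ) * (T:ℝ) := by
    calc ∑ s ∈ Finset.Icc 1 S, ‖G s‖^2
        ≤ ∑ s ∈ Finset.Icc 1 S, L^2 * (d:ℝ) * ((F s).card:ℝ) := by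
          apply Finset.sum_le_sum
          intro s _
          have h1 := hGnorm s
          have h2 : ((F s).card : ℝ) ≤ (d:ℝ) := Nat.cast_le.mpr (hFcard s)
          have h3 : (0:ℝ) ≤ ((F s).card:ℝ) := Nat.cast_nonneg _
          nlinarith [norm_nonneg (G s), mul_nonneg hL0 h3,
            mul_nonneg (mul_nonneg (sq_nonneg L) h3) (sub_nonneg.mpr h2)]
      _ = L^2 * (d:ℝ) * ∑ s ∈ Finset.Icc 1 S, ((F s).card:ℝ) := by
          rw [← Finset.mul_sum]
      _ = L^2 * (d:ℝ) * (T:ℝ) := by rw [hcardsum]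
  -- telescoping bound
  have htele : ∑ s ∈ Finset.Icc 1 S, (‖x s - u s‖^2 - ‖x (s+1) - u s‖^2)
      ≤ 4*R^2 + 4*R*V := by
    have hper : ∀ s ∈ Finset.Icc 1 S, ‖x s - u s‖^2 - ‖x (s+1) - u s‖^2
        ≤ (‖x s - u s‖^2 - ‖x (s+1) - u (s+1)‖^2) + 4*R*‖u (s+1) - u s‖ := by
      intro s hs
      have h := sq_diff_le (hxR (s+1) (by omega)) (huR s) (huR (s+1))
      linarith
    have t1 : ∑ s ∈ Finset.Icc 1 S, (‖x s - u s‖^2 - ‖x (s+1) - u (s+1)‖^2)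
        = ‖x 1 - u 1‖^2 - ‖x (1+S) - u (1+S)‖^2 := by
      rw [sum_Icc_eq_range (fun s => ‖x s - u s‖^2 - ‖x (s+1) - u (s+1)‖^2) 1 S,
        show S+1-1 = S by omega]
      exact Finset.sum_range_sub' (fun i => ‖x (1+i) - u (1+i)‖^2) S
    have t1b : ∑ s ∈ Finset.Icc 1 S, (‖x s - u s‖^2 - ‖x (s+1) - u (s+1)‖^2)
        ≤ 4*R^2 := by
      rw [t1]
      have h1 : ‖x 1 - u 1‖ ≤ 2*R := by
        have := norm_sub_le (x 1) (u 1)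
        have := hxR 1 (le_refl 1)
        have := huR 1
        linarith
      nlinarith [sq_nonneg ‖x (1+S) - u (1+S)‖, norm_nonneg (x 1 - u 1)]
    have t2 : ∑ s ∈ Finset.Icc 1 S, ‖u (s+1) - u s‖ ≤ V := by
      have hsub : Finset.Icc d (T+d-2) ⊆ Finset.Icc 1 S := by
        intro a ha
        rw [Finset.mem_Icc] at ha ⊢
        simp only [hS_def]
        omega
      have hzero : ∀ s ∈ Finset.Icc 1 S, s ∉ Finset.Icc d (T+d-2) →
          ‖u (s+1) - u s‖ = 0 := by
        intro s hs hns
        rw [Finset.mem_Icc] at hs hns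
        simp only [hS_def] at hs
        have hνeq : ν (s+1) = ν s := by
          simp only [hν_def]
          omega
        simp only [hu_def]
        rw [hνeq, sub_self, norm_zero]
      have heq : ∑ s ∈ Finset.Icc 1 S, ‖u (s+1) - u s‖
          = ∑ s ∈ Finset.Icc d (T+d-2), ‖u (s+1) - u s‖ :=
        (Finset.sum_subset hsub hzero).symm
      rw [heq, sum_Icc_eq_range (fun s => ‖u (s+1) - u s‖) d (T+d-2),
        show T+d-2+1-d = T-1 by omega, hV_def,
        sum_Icc_eq_range (fun t => ‖xs (t+1) - xs t‖) 1 (T-1),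
        show T-1+1-1 = T-1 by omega]
      apply le_of_eq
      apply Finset.sum_congr rfl
      intro i hi
      have hi' : i < T-1 := Finset.mem_range.mp hi
      have e1 : ν (d+i+1) = 1+i+1 := by simp only [hν_def]; omega
      have e2 : ν (d+i) = 1+i := by simp only [hν_def]; omega
      simp only [hu_def]
      rw [e1, e2]
    calc ∑ s ∈ Finset.Icc 1 S, (‖x s - u s‖^2 - ‖x (s+1) - u s‖^2)
        ≤ ∑ s ∈ Finset.Icc 1 S, ((‖x s - u s‖^2 - ‖x (s+1) - u (s+1)‖^2)
            + 4*R*‖u (s+1) - u s‖) := Finset.sum_le_sum hper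
      _ = (∑ s ∈ Finset.Icc 1 S, (‖x s - u s‖^2 - ‖x (s+1) - u (s+1)‖^2))
            + ∑ s ∈ Finset.Icc 1 S, 4*R*‖u (s+1) - u s‖ := Finset.sum_add_distrib
      _ ≤ 4*R^2 + 4*R*V := by
          have h4 : ∑ s ∈ Finset.Icc 1 S, 4*R*‖u (s+1) - u s‖
              = 4*R* ∑ s ∈ Finset.Icc 1 S, ‖u (s+1) - u s‖ := by
            rw [Finset.mul_sum]
          have h5 : 4*R* ∑ s ∈ Finset.Icc 1 S, ‖u (s+1) - u s‖ ≤ 4*R*V :=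
            mul_le_mul_of_nonneg_left t2 (by positivity)
          linarith [t1b]
  -- main descent term
  have hA1 : ∑ s ∈ Finset.Icc 1 S, ⟪G s, x s - u s⟫
      ≤ (4*R^2 + 4*R*V)/(2*η) + η/2 * (L^2*(d:ℝ)*(T:ℝ)) := by
    calc ∑ s ∈ Finset.Icc 1 S, ⟪G s, x s - u s⟫
        ≤ ∑ s ∈ Finset.Icc 1 S, ((‖x s - u s‖^2 - ‖x (s+1) - u s‖^2)/(2*η)
            + η/2 * ‖G s‖^2) :=
          Finset.sum_le_sum fun s hs =>
            hstep s (Finset.mem_Icc.mp hs).1 (u s) (humem s)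
      _ = (∑ s ∈ Finset.Icc 1 S, (‖x s - u s‖^2 - ‖x (s+1) - u s‖^2))/(2*η)
            + η/2 * ∑ s ∈ Finset.Icc 1 S, ‖G s‖^2 := by
          rw [Finset.sum_add_distrib, ← Finset.sum_div, ← Finset.mul_sum]
      _ ≤ (4*R^2 + 4*R*V)/(2*η) + η/2 * (L^2*(d:ℝ)*(T:ℝ)) := by
          apply add_le_add
          · exact div_le_div_of_nonneg_right htele (by positivity) |>.trans (le_refl _)
          · exact mul_le_mul_of_nonneg_left hGsq (by positivity)
  -- assemble
  have hinner : ∑ t ∈ Finset.Icc 1 T, ⟪g t, x t - xs t⟫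
      ≤ (4*R^2+4*R*V)/(2*η) + η/2*(L^2*(d:ℝ)*(T:ℝ)) + L*(((d:ℝ)-1)*V)
        + 2*η*L^2*(((d:ℝ)-1)*(T:ℝ)) := by
    rw [hsplit, hA]
    linarith [hA1, hA2, hB]
  have hbound : ∑ t ∈ Finset.Icc 1 T, (f t (x t) - f t (xs t))
      ≤ (1/κ) * ((4*R^2+4*R*V)/(2*η) + η/2*(L^2*(d:ℝ)*(T:ℝ)) + L*(((d:ℝ)-1)*V)
        + 2*η*L^2*(((d:ℝ)-1)*(T:ℝ))) :=
    le_trans hregret (mul_le_mul_of_nonneg_left hinner (by positivity))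
  refine le_trans hbound ?_
  have hκ : κ ≠ 0 := ne_of_gt hκ0
  have hη' : η ≠ 0 := ne_of_gt hη
  have key : 2 * R^2 / (η * κ) + 3 * R * V / (η * κ) + η * L^2 * (T:ℝ) * (d:ℝ) / (2 * κ)
      + L * ((d:ℝ) - 1) * V / κ + 2 * η * ((d:ℝ) - 1) * L^2 * (T:ℝ) / κ
      - (1/κ) * ((4*R^2+4*R*V)/(2*η) + η/2*(L^2*(d:ℝ)*(T:ℝ)) + L*(((d:ℝ)-1)*V)
        + 2*η*L^2*(((d:ℝ)-1)*(T:ℝ))) = R*V/(η*κ) := by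
    field_simp
    ring
  have hpos : 0 ≤ R*V/(η*κ) := by positivity
  linarith [key, hpos]
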